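/- Let F be a finite field with q elements, R ∈ (0,1), and n, r integers with R·n ≤ r ≤ n. Let α ∈ [0, 1 − 1/q] satisfy H_q(α) = R/8. Then the number of subspaces U ∈ Gr(n, n−r) for which there exist an integer m with 1 ≤ m ≤ r and an α-sparse m-dimensional subspace V ⊆ F^n with dim(U ∩ V) ≥ m/2 is at most (4·q^{−r/8}/(1 − q^{−r/8}))·|Gr(n, n−r)| (a real-number inequality, with q^{−r/8} the real power of q with exponent −r/8). -/

import Mathlib

open Matrix Finset

namespace RTC

variable {F : Type*} [Field F] [Fintype F]

/-- All columns of the matrix `a` lie in the code `C`. -/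
def colsIn {n1 n2 : ℕ} (C : Submodule F (Fin n1 → F)) (a : Matrix (Fin n1) (Fin n2) F) : Prop :=
  ∀ j : Fin n2, (fun i => a i j) ∈ C

/-- All rows of the matrix `a` lie in the code `C`. -/
def rowsIn {n1 n2 : ℕ} (C : Submodule F (Fin n2 → F)) (a : Matrix (Fin n1) (Fin n2) F) : Prop :=
  ∀ i : Fin n1, (fun j => a i j) ∈ C

/-- Hamming weight of a matrix: the number of nonzero entries. -/
noncomputable def mwt {n1 n2 : ℕ} (x : Matrix (Fin n1) (Fin n2) F) : ℕ :=
  Nat.card {p : Fin n1 × Fin n2 // x p.1 p.2 ≠ 0}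

/-- The number of nonzero columns of a matrix (`|x|_1`). -/
noncomputable def colWt {n1 n2 : ℕ} (x : Matrix (Fin n1) (Fin n2) F) : ℕ :=
  Nat.card {j : Fin n2 // (fun i => x i j) ≠ 0}

/-- The number of nonzero rows of a matrix (`|x|_2`). -/
noncomputable def rowWt {n1 n2 : ℕ} (x : Matrix (Fin n1) (Fin n2) F) : ℕ :=
  Nat.card {i : Fin n1 // (fun j => x i j) ≠ 0}

/-- Hamming weight of a vector. -/
noncomputable def vwt {n : ℕ} (v : Fin n → F) : ℕ := Nat.card {i : Fin n // v i ≠ 0}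

/-- Membership in `C1 ⊞ C2`: `c = a1 + a2` with all columns of `a1` in `C1`
and all rows of `a2` in `C2`. -/
def memBoxPlus {n1 n2 : ℕ} (C1 : Submodule F (Fin n1 → F)) (C2 : Submodule F (Fin n2 → F))
    (c : Matrix (Fin n1) (Fin n2) F) : Prop :=
  ∃ a1 a2 : Matrix (Fin n1) (Fin n2) F, colsIn C1 a1 ∧ rowsIn C2 a2 ∧ c = a1 + a2

/-- The pair `(C1, C2)` is `ρ`-product-expanding: every `c ∈ C1 ⊞ C2` can be written as
`c = a1 + a2` (columns of `a1` in `C1`, rows of `a2` in `C2`) with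
`ρ·(n1·|a1|_1 + n2·|a2|_2) ≤ |c|`. -/
def ProductExpanding {n1 n2 : ℕ} (ρ : ℝ) (C1 : Submodule F (Fin n1 → F))
    (C2 : Submodule F (Fin n2 → F)) : Prop :=
  ∀ c : Matrix (Fin n1) (Fin n2) F, memBoxPlus C1 C2 c →
    ∃ a1 a2 : Matrix (Fin n1) (Fin n2) F, colsIn C1 a1 ∧ rowsIn C2 a2 ∧ c = a1 + a2 ∧
      ρ * ((n1 : ℝ) * (colWt a1 : ℝ) + (n2 : ℝ) * (rowWt a2 : ℝ)) ≤ (mwt c : ℝ)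

/-- `C1 ⊗ F^{n2}` viewed as a submodule of matrices: all columns lie in `C`. -/
def colSp {n1 : ℕ} (n2 : ℕ) (C : Submodule F (Fin n1 → F)) :
    Submodule F (Matrix (Fin n1) (Fin n2) F) where
  carrier := {a | ∀ j : Fin n2, (fun i => a i j) ∈ C}
  add_mem' := by
    intro a b ha hb j
    exact C.add_mem (ha j) (hb j)
  zero_mem' := by
    intro j
    exact C.zero_mem
  smul_mem' := by
    intro r a ha j
    exact C.smul_mem r (ha j)

/-- `F^{n1} ⊗ C` viewed as a submodule of matrices: all rows lie in `C`. -/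
def rowSp (n1 : ℕ) {n2 : ℕ} (C : Submodule F (Fin n2 → F)) :
    Submodule F (Matrix (Fin n1) (Fin n2) F) where
  carrier := {a | ∀ i : Fin n1, (fun j => a i j) ∈ C}
  add_mem' := by
    intro a b ha hb i
    exact C.add_mem (ha i) (hb i)
  zero_mem' := by
    intro i
    exact C.zero_mem
  smul_mem' := by
    intro r a ha i
    exact C.smul_mem r (ha i)

/-- The tensor product code `C1 ⊗ C2`: all columns in `C1` and all rows in `C2`. -/
def tens {n1 n2 : ℕ} (C1 : Submodule F (Fin n1 → F)) (C2 : Submodule F (Fin n2 → F)) :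
    Submodule F (Matrix (Fin n1) (Fin n2) F) :=
  colSp n2 C1 ⊓ rowSp n1 C2

/-- The dual code `C^⊥`. -/
def dualCode {n : ℕ} (C : Submodule F (Fin n → F)) : Submodule F (Fin n → F) where
  carrier := {y | ∀ c ∈ C, ∑ i, y i * c i = 0}
  add_mem' := by
    intro a b ha hb c hc
    have h2 : ∑ i, (a + b) i * c i = (∑ i, a i * c i) + ∑ i, b i * c i := by
      rw [← Finset.sum_add_distrib]; congr 1; funext i
      show (a i + b i) * c i = _; ring
    rw [h2, ha c hc, hb c hc, add_zero]
  zero_mem' := by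
    intro c hc
    simp
  smul_mem' := by
    intro r a ha c hc
    have h2 : ∑ i, (r • a) i * c i = r * ∑ i, a i * c i := by
      rw [Finset.mul_sum]; congr 1; funext i
      show (r * a i) * c i = _; ring
    rw [h2, ha c hc, mul_zero]

/-- Normalized distance `δ(x, S) = min_{s ∈ S} |x − s| / n²` of a matrix to a set of matrices. -/
noncomputable def ndelta {n : ℕ} (x : Matrix (Fin n) (Fin n) F)
    (S : Set (Matrix (Fin n) (Fin n) F)) : ℝ :=
  sInf ((fun s => (mwt (x - s) : ℝ) / ((n : ℝ) ^ 2)) '' S)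

/-- The code `C1 ⊗ C2` is `ρ`-robustly testable. -/
def RobustlyTestable {n : ℕ} (ρ : ℝ) (C1 C2 : Submodule F (Fin n → F)) : Prop :=
  ∀ x : Matrix (Fin n) (Fin n) F,
    ρ * ndelta x (tens C1 C2 : Set (Matrix (Fin n) (Fin n) F)) ≤
      (ndelta x (colSp n C1 : Set (Matrix (Fin n) (Fin n) F)) +
       ndelta x (rowSp n C2 : Set (Matrix (Fin n) (Fin n) F))) / 2

/-- The code `C1 ⊗ C2` is `ρ`-agreement testable. -/
def AgreementTestable {n : ℕ} (ρ : ℝ) (C1 C2 : Submodule F (Fin n → F)) : Prop :=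
  ∀ c1 c2 : Matrix (Fin n) (Fin n) F, colsIn C1 c1 → rowsIn C2 c2 →
    ∃ c : Matrix (Fin n) (Fin n) F, colsIn C1 c ∧ rowsIn C2 c ∧
      ρ * ((colWt (c1 - c) : ℝ) + (rowWt (c2 - c) : ℝ)) ≤ (mwt (c1 - c2) : ℝ) / (n : ℝ)

/-- The `q`-ary entropy function. -/
noncomputable def Hq (q : ℕ) (x : ℝ) : ℝ :=
  x * Real.logb q (q - 1) - x * Real.logb q x - (1 - x) * Real.logb q (1 - x)

/-- A subspace is `α`-sparse if it is spanned by vectors of Hamming weight at most `α·n`. -/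
def Sparse {n : ℕ} (α : ℝ) (V : Submodule F (Fin n → F)) : Prop :=
  ∃ S : Set (Fin n → F), (∀ v ∈ S, (vwt v : ℝ) ≤ α * n) ∧ Submodule.span F S = V

/-- The Gaussian (`q`-ary) binomial coefficient, as a real number. -/
noncomputable def qBinom (q n k : ℕ) : ℝ :=
  ∏ i ∈ Finset.range k, ((q : ℝ) ^ (n - i) - 1) / ((q : ℝ) ^ (k - i) - 1)

/-- Minimal Hamming distance from a vector to a code. -/
noncomputable def vdist {n : ℕ} (v : Fin n → F) (C : Submodule F (Fin n → F)) : ℕ :=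
  sInf {d : ℕ | ∃ c ∈ C, vwt (v - c) = d}

/-- A codeword `x ∈ C1 ⊞ C2` is `Δ`-minimal. -/
def DeltaMinimal {n : ℕ} (C1 C2 : Submodule F (Fin n → F)) (Δ : ℝ)
    (x : Matrix (Fin n) (Fin n) F) : Prop :=
  (∀ i : Fin n, (vwt (fun j => x i j) : ℝ) ≤ (vdist (fun j => x i j) C2 : ℝ) + Δ) ∧
  (∀ j : Fin n, (vwt (fun i => x i j) : ℝ) ≤ (vdist (fun i => x i j) C1 : ℝ) + Δ)

/-- Hamming weight of the submatrix of `x` with rows in `A` and columns in `B`. -/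
noncomputable def subWt {n : ℕ} (x : Matrix (Fin n) (Fin n) F) (A B : Finset (Fin n)) : ℕ :=
  Nat.card {p : Fin n × Fin n // p.1 ∈ A ∧ p.2 ∈ B ∧ x p.1 p.2 ≠ 0}

/-- The pair `(C1, C2)` is `(s, m, β)`-product-expanding. -/
def SMBExpanding {n : ℕ} (s m β : ℝ) (C1 C2 : Submodule F (Fin n → F)) : Prop :=
  ∀ x : Matrix (Fin n) (Fin n) F, memBoxPlus C1 C2 x → x ≠ 0 →
    DeltaMinimal C1 C2 (β * n) x →
    ∀ A B : Finset (Fin n), (n : ℝ) - m ≤ (A.card : ℝ) → (n : ℝ) - m ≤ (B.card : ℝ) →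
      s ≤ (subWt x A B : ℝ)

/-- The function `c` restricted to every line parallel to axis `i` lies in `C i`
(membership in `C^{(i)}`). -/
def axisIn {ι : Type*} [DecidableEq ι] {n : ι → ℕ} (C : ∀ i, Submodule F (Fin (n i) → F))
    (i : ι) (a : (∀ j, Fin (n j)) → F) : Prop :=
  ∀ y : ∀ j, Fin (n j), (fun s => a (Function.update y i s)) ∈ C i

/-- The number of grid points lying on a line parallel to axis `i` on which `a` is not
identically zero.  Since every such line contains exactly `n i` points, this equals
`n i · |a|_i` where `|a|_i` is the number of nonzero lines parallel to axis `i`. -/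
noncomputable def lineCnt {ι : Type*} [DecidableEq ι] {n : ι → ℕ} (i : ι)
    (a : (∀ j, Fin (n j)) → F) : ℕ :=
  Nat.card {y : ∀ j, Fin (n j) // (fun s : Fin (n i) => a (Function.update y i s)) ≠ 0}

/-- Hamming weight of an element of `F^{n_1 × … × n_m}`. -/
noncomputable def gwt {ι : Type*} {n : ι → ℕ} (a : (∀ j, Fin (n j)) → F) : ℕ :=
  Nat.card {y : ∀ j, Fin (n j) // a y ≠ 0}

/-- The collection `C` is `ρ`-product-expanding: every `c ∈ C_1 ⊞ … ⊞ C_m` can be written as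
`c = Σ_i a_i` with `a_i ∈ C^{(i)}` and `ρ · Σ_i n_i·|a_i|_i ≤ |c|`
(note `lineCnt i (a i) = n_i · |a_i|_i`). -/
def MProdExpanding {ι : Type*} [Fintype ι] [DecidableEq ι] {n : ι → ℕ} (ρ : ℝ)
    (C : ∀ i, Submodule F (Fin (n i) → F)) : Prop :=
  ∀ c : (∀ j, Fin (n j)) → F,
    (∃ a : ι → ((∀ j, Fin (n j)) → F), (∀ i, axisIn C i (a i)) ∧ c = ∑ i, a i) →
    ∃ a : ι → ((∀ j, Fin (n j)) → F), (∀ i, axisIn C i (a i)) ∧ c = ∑ i, a i ∧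
      ρ * (∑ i, (lineCnt i (a i) : ℝ)) ≤ (gwt c : ℝ)

end RTC


/- ====================  Auxiliary development  ==================== -/

open Module

section RTChelpers

lemma natCard_sigma {ι : Type*} [Fintype ι] (g : ι → Type*) [∀ i, Finite (g i)] :
    Nat.card (Σ i, g i) = ∑ i, Nat.card (g i) := by
  classical
  letI : ∀ i, Fintype (g i) := fun i => Fintype.ofFinite (g i)
  simp [Nat.card_eq_fintype_card, Fintype.card_sigma]

lemma card_le_sum {α : Type*} [Finite α] {ι : Type*} [Fintype ι] (P : α → Prop)
    (Q : ι → α → Prop) (h : ∀ a, P a → ∃ i, Q i a) :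
    Nat.card {a // P a} ≤ ∑ i, Nat.card {a // Q i a} := by
  rw [← natCard_sigma]
  have : ∀ a : {a // P a}, ∃ i, Q i a.1 := fun a => h a.1 a.2
  refine Nat.card_le_card_of_injective
    (fun a => ⟨Classical.choose (this a), a.1, Classical.choose_spec (this a)⟩) ?_
  intro a b hab
  exact Subtype.ext (congrArg (fun x : Σ i, {a // Q i a} => (x.2 : α)) hab)

lemma card_sigma_const {ι : Type*} [Finite ι] (g : ι → Type*) [∀ i, Finite (g i)] {c : ℕ}
    (h : ∀ i, Nat.card (g i) = c) : Nat.card (Σ i, g i) = Nat.card ι * c := by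
  classical
  letI : Fintype ι := Fintype.ofFinite ι
  rw [natCard_sigma, Nat.card_eq_fintype_card]
  simp [h, Finset.sum_const, mul_comm]

end RTChelpers

section grass

variable {F V : Type*} [Field F] [Fintype F] [AddCommGroup V] [Module F V]
  [Finite V]

local notation "q" => Fintype.card F

lemma grass_count (D : ℕ) (hD : D ≤ finrank F V) :
    Nat.card {U : Submodule F V // finrank F ↥U = D} * ∏ i ∈ range D, (q ^ D - q ^ i)
      = ∏ i ∈ range D, (q ^ finrank F V - q ^ i) := by
  classical
  haveI : Module.Finite F V := Module.Finite.of_finite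
  have hT : Nat.card { s : Fin D → V // LinearIndependent F s }
      = ∏ i ∈ range D, (q ^ finrank F V - q ^ i) := by
    rw [card_linearIndependent hD]
    exact Fin.prod_univ_eq_prod_range (fun i => q ^ finrank F V - q ^ i) D
  set f : { s : Fin D → V // LinearIndependent F s } →
      {U : Submodule F V // finrank F ↥U = D} :=
    fun s => ⟨Submodule.span F (Set.range s.1), by
      rw [finrank_span_eq_card s.2, Fintype.card_fin]⟩ with hf
  have hfib : ∀ U : {U : Submodule F V // finrank F ↥U = D},
      Nat.card {s // f s = U} = ∏ i ∈ range D, (q ^ D - q ^ i) := by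
    intro U
    have hUD : finrank F ↥U.1 = D := U.2
    have e : {s // f s = U} ≃ { t : Fin D → ↥U.1 // LinearIndependent F t } := by
      refine ⟨fun s => ⟨fun i => ⟨s.1.1 i, ?_⟩, ?_⟩, fun t => ⟨⟨fun i => (t.1 i : V), ?_⟩, ?_⟩,
        ?_, ?_⟩
      · have hsp : Submodule.span F (Set.range s.1.1) = U.1 := congrArg Subtype.val s.2
        exact hsp ▸ Submodule.subset_span (Set.mem_range_self i)
      · apply LinearIndependent.of_comp U.1.subtype
        exact s.1.2
      · exact t.2.map' U.1.subtype (Submodule.ker_subtype _)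
      · apply Subtype.ext
        show Submodule.span F (Set.range fun i => (t.1 i : V)) = U.1
        have htop : Submodule.span F (Set.range t.1) = ⊤ := by
          apply Submodule.eq_top_of_finrank_eq
          rw [finrank_span_eq_card t.2, Fintype.card_fin, hUD]
        have : (Set.range fun i => (t.1 i : V)) = U.1.subtype '' Set.range t.1 := by
          ext x; simp
        rw [this, ← Submodule.map_span, htop, Submodule.map_subtype_top]
      · intro s; apply Subtype.ext; apply Subtype.ext; rfl
      · intro t; apply Subtype.ext; funext i; apply Subtype.ext; rfl
    rw [Nat.card_congr e, card_linearIndependent (by rw [hUD])]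
    rw [hUD]
    exact Fin.prod_univ_eq_prod_range (fun i => q ^ D - q ^ i) D
  have := card_sigma_const (fun U : {U : Submodule F V // finrank F ↥U = D} => {s // f s = U})
    hfib
  rw [← this, ← hT, Nat.card_congr (Equiv.sigmaFiberEquiv f)]

end grass


section RTCgr
noncomputable def grP (q N D : ℕ) : ℝ := ∏ i ∈ range D, ((q : ℝ) ^ N - (q : ℝ) ^ i)

noncomputable def grQ (q N D : ℕ) : ℝ := grP q N D / grP q D D

variable {q : ℕ} (hq : 2 ≤ q)
include hq

lemma grP_pos {N D : ℕ} (hD : D ≤ N) : 0 < grP q N D := by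
  apply Finset.prod_pos
  intro i hi
  have hi' : i < N := lt_of_lt_of_le (mem_range.mp hi) hD
  have h1 : (1:ℝ) < (q:ℝ) := by exact_mod_cast hq.trans_lt' one_lt_two
  have := pow_lt_pow_right₀ h1 hi'
  linarith

lemma grQ_pos {N D : ℕ} (hD : D ≤ N) : 0 < grQ q N D :=
  div_pos (grP_pos hq hD) (grP_pos hq le_rfl)

lemma grP_split {N D k : ℕ} (hk : k ≤ D) (hD : D ≤ N) :
    grP q N D = grP q N k * (q : ℝ) ^ (k * (D - k)) * grP q (N - k) (D - k) := by
  have h1 : (1:ℝ) ≤ (q:ℝ) := by exact_mod_cast hq.trans' one_le_two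
  unfold grP
  rw [← Finset.prod_range_mul_prod_Ico _ hk]
  rw [mul_assoc]
  congr 1
  rw [Finset.prod_Ico_eq_prod_range]
  have : ∀ j ∈ range (D - k), (q:ℝ) ^ N - (q:ℝ) ^ (k + j)
      = (q:ℝ) ^ k * ((q:ℝ) ^ (N - k) - (q:ℝ) ^ j) := by
    intro j hj
    rw [mul_sub, ← pow_add, ← pow_add, Nat.add_sub_cancel' (hk.trans hD)]
  rw [Finset.prod_congr rfl this, Finset.prod_mul_distrib, Finset.prod_const]
  rw [Finset.card_range, ← pow_mul]

lemma grQ_flag {n d k : ℕ} (hk : k ≤ d) (hd : d ≤ n) :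
    grQ q n d * grQ q d k = grQ q n k * grQ q (n - k) (d - k) := by
  have h1 := grP_split hq hk hd
  have h2 := grP_split hq hk (le_refl d)
  have pkk := grP_pos hq (le_refl k)
  have pdd := grP_pos hq (le_refl d)
  have pdkdk := grP_pos hq (le_refl (d - k))
  have hk1 := (grP_pos hq (le_refl k)).ne'
  have hd1 := (grP_pos hq (le_refl d)).ne'
  have hdk1 := (grP_pos hq (le_refl (d - k))).ne'
  have hqpow : ((q:ℝ)) ^ (k * (d - k)) ≠ 0 := by positivity
  have hdk2 := (grP_pos hq hk).ne'
  have hq0 : ((q:ℝ)) ≠ 0 := by positivity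
  unfold grQ
  rw [h1, h2]
  field_simp

omit hq in
lemma one_sub_sum_le_prod_one_sub {ι : Type*} (s : Finset ι) (x : ι → ℝ)
    (h0 : ∀ i ∈ s, 0 ≤ x i) (h1 : ∀ i ∈ s, x i ≤ 1) :
    1 - ∑ i ∈ s, x i ≤ ∏ i ∈ s, (1 - x i) := by
  classical
  induction s using Finset.induction with
  | empty => simp
  | insert a s hnotmem ih =>
    rw [Finset.sum_insert hnotmem, Finset.prod_insert hnotmem]
    have ha0 := h0 a (mem_insert_self a s)
    have ha1 := h1 a (mem_insert_self a s)
    have ih' := ih (fun i hi => h0 i (mem_insert_of_mem hi)) (fun i hi => h1 i (mem_insert_of_mem hi))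
    have hsum : 0 ≤ ∑ i ∈ s, x i := Finset.sum_nonneg (fun i hi => h0 i (mem_insert_of_mem hi))
    nlinarith

lemma prod_one_sub_q_ge {D : ℕ} : (1/4 : ℝ) ≤ ∏ j ∈ range D, (1 - ((q:ℝ))⁻¹ ^ (j+1)) := by
  have hq1 : (1:ℝ) < (q:ℝ) := by exact_mod_cast hq.trans_lt' one_lt_two
  have hqi : ((q:ℝ))⁻¹ ≤ 1/2 := by
    rw [inv_le_comm₀ (by linarith) (by norm_num)]
    norm_num
    exact_mod_cast hq
  have hqi0 : 0 ≤ ((q:ℝ))⁻¹ := by positivity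
  cases D with
  | zero => norm_num
  | succ D =>
    rw [Finset.prod_range_succ']
    have hhead : (1/2:ℝ) ≤ 1 - ((q:ℝ))⁻¹ ^ (0+1) := by
      simp; linarith
    have htail : (1/2:ℝ) ≤ ∏ j ∈ range D, (1 - ((q:ℝ))⁻¹ ^ (j+1+1)) := by
      have hb : ∀ j ∈ range D, ((q:ℝ))⁻¹ ^ (j+1+1) ≤ (1/2:ℝ) ^ (j+2) := by
        intro j hj
        exact pow_le_pow_left₀ hqi0 hqi (j+2)
      have hsum : ∑ j ∈ range D, ((q:ℝ))⁻¹ ^ (j+1+1) ≤ 1/2 := by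
        calc ∑ j ∈ range D, ((q:ℝ))⁻¹ ^ (j+1+1) ≤ ∑ j ∈ range D, (1/2:ℝ) ^ (j+2) :=
              Finset.sum_le_sum hb
          _ = (1/4) * ∑ j ∈ range D, (1/2:ℝ) ^ j := by
              rw [Finset.mul_sum]; apply Finset.sum_congr rfl; intro j hj; ring
          _ ≤ (1/4) * 2 := by
              have := sum_geometric_two_le D
              linarith
          _ = 1/2 := by norm_num
      have := one_sub_sum_le_prod_one_sub (range D) (fun j => ((q:ℝ))⁻¹ ^ (j+1+1))
        (fun i _ => by positivity)
        (fun i _ => by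
          calc ((q:ℝ))⁻¹ ^ (i+1+1) ≤ (1/2:ℝ)^(i+2) := pow_le_pow_left₀ hqi0 hqi _
            _ ≤ 1 := by
              apply pow_le_one₀ <;> norm_num)
      linarith
    calc (1/4:ℝ) = (1/2) * (1/2) := by norm_num
      _ ≤ (∏ j ∈ range D, (1 - ((q:ℝ))⁻¹ ^ (j+1+1))) * (1 - ((q:ℝ))⁻¹ ^ (0+1)) := by
          apply mul_le_mul htail hhead (by norm_num)
          positivity

lemma grQ_upper {N D : ℕ} (hD : D ≤ N) : grQ q N D ≤ 4 * (q:ℝ) ^ (D * (N - D)) := by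
  have hq1 : (1:ℝ) < (q:ℝ) := by exact_mod_cast hq.trans_lt' one_lt_two
  have hq0 : (0:ℝ) < (q:ℝ) := by linarith
  set pf : ℝ := ∏ i ∈ range D, (1 - ((q:ℝ))⁻¹ ^ (D - i)) with hpf
  have hpf4 : (1/4:ℝ) ≤ pf := by
    calc (1/4:ℝ) ≤ ∏ j ∈ range D, (1 - ((q:ℝ))⁻¹ ^ (j+1)) := prod_one_sub_q_ge hq
      _ = pf := by
          rw [hpf, ← Finset.prod_range_reflect]
          apply Finset.prod_congr rfl
          intro j hj
          have := mem_range.mp hj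
          congr 2
          omega
  have key : grP q N D * pf ≤ (q:ℝ) ^ (D * (N - D)) * grP q D D := by
    rw [hpf]
    unfold grP
    rw [← Finset.prod_mul_distrib]
    have hc : ((q:ℝ)) ^ (D * (N - D)) = ∏ _i ∈ range D, ((q:ℝ)) ^ (N - D) := by
      rw [Finset.prod_const, Finset.card_range, ← pow_mul, Nat.mul_comm]
    rw [hc, ← Finset.prod_mul_distrib]
    apply Finset.prod_le_prod
    · intro i hi
      have hiD := mem_range.mp hi
      have h1 : (q:ℝ)^i < (q:ℝ)^N := pow_lt_pow_right₀ hq1 (lt_of_lt_of_le hiD hD)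
      have h2 : ((q:ℝ))⁻¹ ^ (D - i) ≤ 1 := by
        apply pow_le_one₀ (by positivity)
        rw [inv_le_one_iff₀]; right; linarith
      nlinarith
    · intro i hi
      have hiD := mem_range.mp hi
      set a : ℝ := (q:ℝ)^i
      set b : ℝ := (q:ℝ)^(D - i)
      set c : ℝ := (q:ℝ)^(N - D)
      set u : ℝ := ((q:ℝ))⁻¹ ^ (D - i)
      have hab : (q:ℝ)^D = a * b := by rw [← pow_add]; congr 1; omega
      have hcab : (q:ℝ)^N = c * (a * b) := by rw [← hab, ← pow_add]; congr 1; omega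
      have hbu : b * u = 1 := by
        have : u = ((q:ℝ) ^ (D - i))⁻¹ := inv_pow _ _
        rw [this]
        field_simp
        rfl
      have ha0 : 0 < a := by positivity
      have hb1 : (1:ℝ) ≤ b := one_le_pow₀ (by linarith)
      have hc1 : (1:ℝ) ≤ c := one_le_pow₀ (by linarith)
      have hu0 : 0 ≤ u := by positivity
      have hu1 : u ≤ 1 := by
        apply pow_le_one₀ (by positivity)
        rw [inv_le_one_iff₀]; right; linarith
      rw [hab, hcab]
      have h1 : c * (a*b) * u = c * a := by
        rw [mul_assoc, mul_assoc, hbu, mul_one]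
      nlinarith [mul_le_of_le_one_right ha0.le hu1]
  have hPDD := grP_pos hq (le_refl D)
  have hPND := (grP_pos hq hD).le
  have step : grP q N D ≤ 4 * ((q:ℝ) ^ (D * (N - D)) * grP q D D) := by
    calc grP q N D = 4 * (grP q N D * (1/4)) := by ring
      _ ≤ 4 * (grP q N D * pf) := by
          apply mul_le_mul_of_nonneg_left (mul_le_mul_of_nonneg_left hpf4 hPND) (by norm_num)
      _ ≤ 4 * ((q:ℝ) ^ (D * (N - D)) * grP q D D) := by linarith
  unfold grQ
  rw [div_le_iff₀ hPDD]
  linarith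

lemma grP_step {n d k : ℕ} (hk : k ≤ d) (hd : d ≤ n) :
    grP q d k * (q:ℝ) ^ (k * (n - d)) ≤ grP q n k := by
  have hq1 : (1:ℝ) < (q:ℝ) := by exact_mod_cast hq.trans_lt' one_lt_two
  unfold grP
  have hc : ((q:ℝ)) ^ (k * (n - d)) = ∏ _i ∈ range k, ((q:ℝ)) ^ (n - d) := by
    rw [Finset.prod_const, Finset.card_range, ← pow_mul, Nat.mul_comm]
  rw [hc, ← Finset.prod_mul_distrib]
  apply Finset.prod_le_prod
  · intro i hi
    have hik := mem_range.mp hi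
    have h1 : (q:ℝ)^i < (q:ℝ)^d := pow_lt_pow_right₀ hq1 (lt_of_lt_of_le hik hk)
    have h2 : (0:ℝ) ≤ (q:ℝ)^(n-d) := by positivity
    apply mul_nonneg (by linarith) h2
  · intro i hi
    have hik := mem_range.mp hi
    have e : ((q:ℝ)^d - (q:ℝ)^i) * (q:ℝ)^(n-d) = (q:ℝ)^n - (q:ℝ)^(n - d + i) := by
      rw [sub_mul, ← pow_add, ← pow_add]
      congr 2 <;> omega
    rw [e]
    have : (q:ℝ)^i ≤ (q:ℝ)^(n - d + i) := pow_le_pow_right₀ (by linarith) (by omega)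
    linarith

lemma grQ_above {n d k : ℕ} (hk : k ≤ d) (hd : d ≤ n) :
    grQ q (n - k) (d - k) * (q:ℝ) ^ (k * (n - d)) ≤ grQ q n d := by
  have hdk : grQ q d k * (q:ℝ) ^ (k * (n - d)) ≤ grQ q n k := by
    unfold grQ
    rw [div_mul_eq_mul_div]
    gcongr
    · exact (grP_pos hq (le_refl k)).le
    · exact grP_step hq hk hd
  have hflag := grQ_flag hq hk hd
  have hgdk := grQ_pos hq hk
  have hgnkdk := (grQ_pos hq (show d - k ≤ n - k by omega)).le
  rw [← mul_le_mul_iff_of_pos_right hgdk, hflag]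
  nlinarith [mul_le_mul_of_nonneg_left hdk hgnkdk]

end RTCgr

section sub
variable {F V : Type*} [Field F] [AddCommGroup V] [Module F V] [FiniteDimensional F V]

lemma finrank_comap_mkQ (W : Submodule F V) (U' : Submodule F (V ⧸ W)) :
    finrank F ↥(Submodule.comap W.mkQ U') = finrank F ↥U' + finrank F ↥W := by
  set U := Submodule.comap W.mkQ U' with hU
  have hWU : W ≤ U := by
    intro x hx
    simp only [hU, Submodule.mem_comap]
    have : W.mkQ x = 0 := (Submodule.Quotient.mk_eq_zero W).mpr hx
    rw [this]; exact U'.zero_mem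
  set f : ↥U →ₗ[F] V ⧸ W := W.mkQ.comp U.subtype with hf
  have hrange : LinearMap.range f = U' := by
    rw [hf, LinearMap.range_comp, Submodule.range_subtype]
    exact Submodule.map_comap_eq_self (by rw [Submodule.range_mkQ]; exact le_top)
  have hker : LinearMap.ker f = Submodule.comap U.subtype W := by
    rw [hf, LinearMap.ker_comp, Submodule.ker_mkQ]
  have := LinearMap.finrank_range_add_finrank_ker f
  rw [hrange, hker] at this
  rw [← this, (Submodule.comapSubtypeEquivOfLe hWU).finrank_eq]

lemma card_above (W : Submodule F V) {d : ℕ} (hWd : finrank F ↥W ≤ d) :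
    Nat.card {U : Submodule F V // finrank F ↥U = d ∧ W ≤ U} =
      Nat.card {U' : Submodule F (V ⧸ W) // finrank F ↥U' = d - finrank F ↥W} := by
  apply Nat.card_congr
  refine ⟨fun U => ⟨Submodule.map W.mkQ U.1, ?_⟩, fun U' => ⟨Submodule.comap W.mkQ U'.1, ?_, ?_⟩,
    ?_, ?_⟩
  · obtain ⟨hUd, hWU⟩ := U.2
    have hcm : Submodule.comap W.mkQ (Submodule.map W.mkQ U.1) = U.1 := by
      rw [Submodule.comap_map_eq, Submodule.ker_mkQ, sup_eq_left.mpr hWU]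
    have := finrank_comap_mkQ W (Submodule.map W.mkQ U.1)
    rw [hcm, hUd] at this
    omega
  · rw [finrank_comap_mkQ W U'.1, U'.2]
    omega
  · intro x hx
    simp only [Submodule.mem_comap]
    have : W.mkQ x = 0 := (Submodule.Quotient.mk_eq_zero W).mpr hx
    rw [this]; exact U'.1.zero_mem
  · intro U
    apply Subtype.ext
    show Submodule.comap W.mkQ (Submodule.map W.mkQ U.1) = U.1
    rw [Submodule.comap_map_eq, Submodule.ker_mkQ, sup_eq_left.mpr U.2.2]
  · intro U'
    apply Subtype.ext
    show Submodule.map W.mkQ (Submodule.comap W.mkQ U'.1) = U'.1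
    exact Submodule.map_comap_eq_self (by rw [Submodule.range_mkQ]; exact le_top)

lemma card_inside (X : Submodule F V) (k : ℕ) :
    Nat.card {W : Submodule F V // W ≤ X ∧ finrank F ↥W = k} =
      Nat.card {W' : Submodule F ↥X // finrank F ↥W' = k} := by
  apply Nat.card_congr
  refine ⟨fun W => ⟨Submodule.comap X.subtype W.1, ?_⟩,
    fun W' => ⟨Submodule.map X.subtype W'.1, Submodule.map_subtype_le _ _, ?_⟩, ?_, ?_⟩
  · rw [(Submodule.comapSubtypeEquivOfLe W.2.1).finrank_eq, W.2.2]
  · rw [Submodule.finrank_map_subtype_eq, W'.2]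
  · intro W
    apply Subtype.ext
    show Submodule.map X.subtype (Submodule.comap X.subtype W.1) = W.1
    rw [Submodule.map_comap_eq, Submodule.range_subtype, inf_eq_right.mpr W.2.1]
  · intro W'
    apply Subtype.ext
    show Submodule.comap X.subtype (Submodule.map X.subtype W'.1) = W'.1
    rw [Submodule.comap_map_eq, Submodule.ker_subtype, sup_bot_eq]

lemma exists_sub (X : Submodule F V) {k : ℕ} (hk : k ≤ finrank F ↥X) :
    ∃ W : Submodule F V, W ≤ X ∧ finrank F ↥W = k := by
  have b := finBasis F ↥X
  set v : Fin k → V := fun j => (b (Fin.castLE hk j) : V) with hv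
  have hind : LinearIndependent F v := by
    have h1 : LinearIndependent F (fun j : Fin k => b (Fin.castLE hk j)) :=
      b.linearIndependent.comp _ (Fin.castLE_injective hk)
    exact h1.map' X.subtype (Submodule.ker_subtype _)
  refine ⟨Submodule.span F (Set.range v), ?_, ?_⟩
  · rw [Submodule.span_le]
    rintro x ⟨j, rfl⟩
    exact (b (Fin.castLE hk j)).2
  · rw [finrank_span_eq_card hind, Fintype.card_fin]
end sub


section RTCball
variable {F : Type*} [Field F] [Fintype F] {n : ℕ} {α : ℝ}
local notation "q" => Fintype.card F

lemma vwt_eq_filter [DecidableEq F] (v : Fin n → F) : RTC.vwt v = (univ.filter (fun i => v i ≠ 0)).card := by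
  classical
  rw [RTC.vwt, Nat.card_eq_fintype_card, Fintype.card_subtype]


lemma card_wt_le (i : ℕ) :
    Nat.card {v : Fin n → F // RTC.vwt v = i} ≤ n.choose i * (q - 1) ^ i := by
  classical
  set T := Σ s : {s : Finset (Fin n) // s.card = i}, (↥s.1 → {x : F // x ≠ 0}) with hT
  have hcard : Nat.card T = n.choose i * (q - 1) ^ i := by
    have h1 : ∀ s : {s : Finset (Fin n) // s.card = i},
        Nat.card (↥s.1 → {x : F // x ≠ 0}) = (q - 1) ^ i := by
      intro s
      rw [Nat.card_eq_fintype_card, Fintype.card_fun]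
      have h2 : Fintype.card {x : F // x ≠ 0} = q - 1 := by
        rw [Fintype.card_subtype_compl, Fintype.card_subtype_eq]
      rw [h2]
      congr 1
      rw [Fintype.card_coe, s.2]
    rw [card_sigma_const _ h1]
    congr 1
    rw [Nat.card_eq_fintype_card, Fintype.card_subtype]
    have : univ.filter (fun s : Finset (Fin n) => s.card = i) = Finset.powersetCard i univ := by
      rw [Finset.powersetCard_eq_filter, Finset.powerset_univ]
    rw [this, Finset.card_powersetCard, Finset.card_univ, Fintype.card_fin]
  rw [← hcard]
  set g : {v : Fin n → F // RTC.vwt v = i} → T := fun v =>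
    ⟨⟨univ.filter (fun j => v.1 j ≠ 0), by rw [← vwt_eq_filter, v.2]⟩,
      fun j => ⟨v.1 j.1, (mem_filter.mp j.2).2⟩⟩ with hg
  have hkey : ∀ v : {v : Fin n → F // RTC.vwt v = i}, ∀ j : Fin n,
      v.1 j = (if h : j ∈ (g v).1.1 then ((g v).2 ⟨j, h⟩ : F) else 0) := by
    intro v j
    by_cases h : j ∈ (g v).1.1
    · rw [dif_pos h]
    · rw [dif_neg h]
      have : ¬ (v.1 j ≠ 0) := by
        intro hne
        exact h (mem_filter.mpr ⟨mem_univ j, hne⟩)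
      tauto
  apply Nat.card_le_card_of_injective g
  intro a b hab
  apply Subtype.ext
  funext j
  rw [hkey a j, hkey b j, hab]

lemma ball_card_le (w : ℕ) :
    Nat.card {v : Fin n → F // RTC.vwt v ≤ w} ≤ ∑ i ∈ range (w + 1), n.choose i * (q - 1) ^ i := by
  classical
  have h := card_le_sum (fun v : Fin n → F => RTC.vwt v ≤ w)
    (fun (i : Fin (w+1)) (v : Fin n → F) => RTC.vwt v = i.1)
    (fun v hv => ⟨⟨RTC.vwt v, by omega⟩, rfl⟩)
  apply h.trans
  rw [← Fin.sum_univ_eq_sum_range (fun i => n.choose i * (q-1)^i) (w+1)]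
  exact Finset.sum_le_sum (fun i _ => card_wt_le i.1)

lemma rpow_mul_logb {Q y c : ℝ} (hQ1 : 1 < Q) (hy : 0 < y) :
    Q ^ (Real.logb Q y * c) = y ^ c := by
  rw [Real.rpow_mul (by linarith : (0:ℝ) ≤ Q), Real.rpow_logb (by linarith) (by linarith) hy]

lemma entropy_ball (hq : 2 ≤ q) (hα0 : 0 < α) (hα1 : α ≤ 1 - 1/(q:ℝ)) :
    (Nat.card {v : Fin n → F // (RTC.vwt v : ℝ) ≤ α * n} : ℝ) ≤
      (q:ℝ) ^ ((n:ℝ) * RTC.Hq q α) := by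
  have hQ1 : (1:ℝ) < (q:ℝ) := by exact_mod_cast hq.trans_lt' one_lt_two
  have hQ0 : (0:ℝ) < (q:ℝ) := by linarith
  set Q : ℝ := (q:ℝ) with hQdef
  have hb0 : 0 < 1 - α := by
    have : 1/Q > 0 := by positivity
    linarith
  have hα1' : α < 1 := by linarith
  have hQ11 : (0:ℝ) < Q - 1 := by linarith
  set w : ℕ := ⌊α * n⌋₊ with hw
  have hwn : w ≤ n := by
    have h1 : α * n ≤ n := by nlinarith [Nat.cast_nonneg (α := ℝ) n]
    calc w ≤ ⌊(n:ℝ)⌋₊ := Nat.floor_mono h1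
      _ = n := Nat.floor_natCast n
  -- identify the two sets
  have hset : ∀ v : Fin n → F, ((RTC.vwt v : ℝ) ≤ α * n) ↔ RTC.vwt v ≤ w := by
    intro v
    rw [hw, Nat.le_floor_iff (by positivity)]
  have hcardeq : Nat.card {v : Fin n → F // (RTC.vwt v : ℝ) ≤ α * n}
      = Nat.card {v : Fin n → F // RTC.vwt v ≤ w} := by
    apply Nat.card_congr
    exact Equiv.subtypeEquivRight hset
  -- the rpow expression
  set QH : ℝ := Q ^ ((n:ℝ) * RTC.Hq q α) with hQH
  have hQHval : QH = (Q-1) ^ (α*n) * α ^ (-(α*n)) * (1-α) ^ (-((1-α)*(n:ℝ))) := by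
    rw [hQH, RTC.Hq]
    have : (n:ℝ) * (α * Real.logb Q (Q - 1) - α * Real.logb Q α - (1 - α) * Real.logb Q (1 - α))
        = Real.logb Q (Q-1) * (α*n) + (Real.logb Q α * (-(α*n))
          + Real.logb Q (1-α) * (-((1-α)*(n:ℝ)))) := by ring
    rw [this, Real.rpow_add hQ0, Real.rpow_add hQ0]
    rw [rpow_mul_logb hQ1 hQ11, rpow_mul_logb hQ1 hα0, rpow_mul_logb hQ1 hb0]
    ring
  -- per-term inequality
  have hterm : ∀ i ∈ range (w+1),
      ((n.choose i * (q - 1) ^ i : ℕ) : ℝ)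
        ≤ QH * ((n.choose i : ℝ) * α ^ i * (1-α) ^ (n - i)) := by
    intro i hi
    have hiw : i ≤ w := by have := mem_range.mp hi; omega
    have hin : i ≤ n := hiw.trans hwn
    have hiα : (i:ℝ) ≤ α * n := le_trans (by exact_mod_cast Nat.cast_le.mpr hiw)
      (Nat.floor_le (by positivity))
    have hcast : ((n.choose i * (q - 1) ^ i : ℕ) : ℝ) = (n.choose i : ℝ) * (Q - 1) ^ i := by
      push_cast [Nat.cast_sub (by omega : 1 ≤ q)]
      ring
    rw [hcast]
    have hmain : (Q - 1) ^ i ≤ QH * (α ^ i * (1-α) ^ (n - i)) := by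
      rw [hQHval]
      set e : ℝ := α * n - (i:ℝ) with he
      have he0 : 0 ≤ e := by linarith
      -- convert nat pows to rpow
      rw [← Real.rpow_natCast (Q-1) i, ← Real.rpow_natCast α i, ← Real.rpow_natCast (1-α) (n-i)]
      have hni : ((n - i : ℕ) : ℝ) = (n:ℝ) - (i:ℝ) := by
        push_cast [Nat.cast_sub hin]; ring
      rw [hni]
      have h1' : α ^ (-(α*n)) * α ^ ((i:ℝ)) = α ^ ((i:ℝ) - α*n) := by
        rw [← Real.rpow_add hα0]; congr 1; ring
      have h2' : (1-α) ^ (-((1-α)*(n:ℝ))) * (1-α) ^ ((n:ℝ) - (i:ℝ))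
          = (1-α) ^ (α*n - (i:ℝ)) := by
        rw [← Real.rpow_add hb0]; congr 1; ring
      have hrhs : (Q-1) ^ (α*n) * α ^ (-(α*n)) * (1-α) ^ (-((1-α)*(n:ℝ)))
            * (α ^ ((i:ℝ)) * (1-α) ^ ((n:ℝ) - (i:ℝ)))
          = (Q-1) ^ (α*n) * (α ^ ((i:ℝ) - α*n) * (1-α) ^ (α*n - (i:ℝ))) := by
        calc (Q-1) ^ (α*n) * α ^ (-(α*n)) * (1-α) ^ (-((1-α)*(n:ℝ)))
              * (α ^ ((i:ℝ)) * (1-α) ^ ((n:ℝ) - (i:ℝ)))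
            = (Q-1) ^ (α*n) * ((α ^ (-(α*n)) * α ^ ((i:ℝ)))
              * ((1-α) ^ (-((1-α)*(n:ℝ))) * (1-α) ^ ((n:ℝ) - (i:ℝ)))) := by ring
          _ = (Q-1) ^ (α*n) * (α ^ ((i:ℝ) - α*n) * (1-α) ^ (α*n - (i:ℝ))) := by
              rw [h1', h2']
      rw [hrhs]
      have hlhs : (Q-1) ^ ((i:ℝ)) = (Q-1) ^ (α*n) * (Q-1) ^ ((i:ℝ) - α*n) := by
        rw [← Real.rpow_add hQ11]; ring_nf
      rw [hlhs]
      apply mul_le_mul_of_nonneg_left _ (Real.rpow_nonneg hQ11.le _)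
      -- (Q-1)^(i - αn) ≤ α^(i-αn) * (1-α)^(αn - i) = (α/(1-α))^(i-αn)
      have hfr : α ^ ((i:ℝ) - α*n) * (1-α) ^ (α*n - (i:ℝ)) = (α/(1-α)) ^ ((i:ℝ) - α*n) := by
        rw [Real.div_rpow hα0.le hb0.le]
        rw [div_eq_mul_inv, ← Real.rpow_neg hb0.le]
        ring_nf
      rw [hfr]
      apply Real.rpow_le_rpow_of_nonpos (by positivity) _ (by linarith)
      -- α/(1-α) ≤ Q - 1
      rw [div_le_iff₀ hb0]
      have h1Q : 1/Q ≤ 1 - α := by linarith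
      have h2Q : (Q-1)*(1/Q) ≤ (Q-1)*(1-α) := mul_le_mul_of_nonneg_left h1Q hQ11.le
      have h3Q : (Q-1)*(1/Q) = 1 - 1/Q := by field_simp
      linarith
    calc (n.choose i : ℝ) * (Q - 1) ^ i
        ≤ (n.choose i : ℝ) * (QH * (α ^ i * (1-α) ^ (n - i))) := by
          apply mul_le_mul_of_nonneg_left hmain (by positivity)
      _ = QH * ((n.choose i : ℝ) * α ^ i * (1-α) ^ (n - i)) := by ring
  -- sum bound
  have hQHpos : 0 ≤ QH := Real.rpow_nonneg hQ0.le _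
  have hsum1 : ∑ i ∈ range (w+1), (n.choose i : ℝ) * α ^ i * (1-α) ^ (n - i)
      ≤ ∑ i ∈ range (n+1), (n.choose i : ℝ) * α ^ i * (1-α) ^ (n - i) := by
    apply Finset.sum_le_sum_of_subset_of_nonneg
    · apply Finset.range_subset_range.mpr; omega
    · intro i _ _; positivity
  have hbinom : ∑ i ∈ range (n+1), (n.choose i : ℝ) * α ^ i * (1-α) ^ (n - i) = 1 := by
    have hadd := add_pow α (1-α) n
    have h1 : α + (1-α) = 1 := by ring
    rw [h1, one_pow] at hadd
    calc ∑ i ∈ range (n+1), (n.choose i : ℝ) * α ^ i * (1-α) ^ (n - i)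
        = ∑ i ∈ range (n+1), α ^ i * (1-α) ^ (n - i) * (n.choose i : ℝ) := by
          apply Finset.sum_congr rfl; intro i _; ring
      _ = 1 := hadd.symm
  calc (Nat.card {v : Fin n → F // (RTC.vwt v : ℝ) ≤ α * n} : ℝ)
      = (Nat.card {v : Fin n → F // RTC.vwt v ≤ w} : ℝ) := by rw [hcardeq]
    _ ≤ ((∑ i ∈ range (w + 1), n.choose i * (q - 1) ^ i : ℕ) : ℝ) := by
        exact_mod_cast ball_card_le w
    _ = ∑ i ∈ range (w + 1), ((n.choose i * (q - 1) ^ i : ℕ) : ℝ) := by push_cast; ring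
    _ ≤ ∑ i ∈ range (w + 1), QH * ((n.choose i : ℝ) * α ^ i * (1-α) ^ (n - i)) :=
        Finset.sum_le_sum hterm
    _ = QH * ∑ i ∈ range (w + 1), (n.choose i : ℝ) * α ^ i * (1-α) ^ (n - i) := by
        rw [Finset.mul_sum]
    _ ≤ QH * 1 := by
        apply mul_le_mul_of_nonneg_left _ hQHpos
        exact hsum1.trans (le_of_eq hbinom)
    _ = QH := mul_one QH

lemma sparse_card (m : ℕ) :
    Nat.card {V : Submodule F (Fin n → F) // RTC.Sparse α V ∧ finrank F ↥V = m}
      ≤ (Nat.card {v : Fin n → F // (RTC.vwt v : ℝ) ≤ α * n}) ^ m := by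
  classical
  set ball := {v : Fin n → F // (RTC.vwt v : ℝ) ≤ α * n} with hball
  have hex : ∀ V : {V : Submodule F (Fin n → F) // RTC.Sparse α V ∧ finrank F ↥V = m},
      ∃ g : Fin m → ball, Submodule.span F (Set.range (fun j => (g j).1)) = V.1 := by
    rintro ⟨V, ⟨S, hS, hspan⟩, hdim⟩
    obtain ⟨b, hbS, hbspan, hbind⟩ := exists_linearIndependent F S
    haveI : Fintype ↥b := (Set.toFinite b).fintype
    have hbcard : Fintype.card ↥b = m := by
      have h1 : finrank F ↥(Submodule.span F b) = b.toFinset.card :=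
        finrank_span_set_eq_card hbind
      rw [hbspan, hspan, hdim] at h1
      rw [← Set.toFinset_card, h1]
    set e : Fin m ≃ ↥b := (Fintype.equivFinOfCardEq hbcard).symm with he
    refine ⟨fun j => ⟨(e j : Fin n → F), hS _ (hbS (e j).2)⟩, ?_⟩
    have hrange : (Set.range fun j => ((e j : ↥b) : Fin n → F)) = b := by
      ext x
      constructor
      · rintro ⟨j, rfl⟩; exact (e j).2
      · intro hx
        exact ⟨e.symm ⟨x, hx⟩, by simp⟩
    show Submodule.span F (Set.range fun j => ((e j : ↥b) : Fin n → F)) = V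
    rw [hrange, hbspan, hspan]
  set Φ : {V : Submodule F (Fin n → F) // RTC.Sparse α V ∧ finrank F ↥V = m} → (Fin m → ball) :=
    fun V => Classical.choose (hex V) with hΦ
  have hinj : Function.Injective Φ := by
    intro V1 V2 h12
    have s1 := Classical.choose_spec (hex V1)
    have s2 := Classical.choose_spec (hex V2)
    apply Subtype.ext
    rw [← s1, ← s2]
    have : Classical.choose (hex V1) = Classical.choose (hex V2) := h12
    rw [this]
  have := Nat.card_le_card_of_injective Φ hinj
  apply this.trans
  apply le_of_eq
  rw [Nat.card_eq_fintype_card, Fintype.card_fun, Nat.card_eq_fintype_card, Fintype.card_fin]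

end RTCball

section RTCmain
-- cast helper
lemma grP_cast {q N D : ℕ} (hq : 1 ≤ q) (hD : D ≤ N) :
    ((∏ i ∈ range D, (q ^ N - q ^ i) : ℕ) : ℝ) = grP q N D := by
  rw [Nat.cast_prod, grP]
  apply Finset.prod_congr rfl
  intro i hi
  have : q ^ i ≤ q ^ N := Nat.pow_le_pow_right hq (le_trans (le_of_lt (mem_range.mp hi)) hD)
  push_cast [Nat.cast_sub this]
  ring

lemma cardGr_eq {F V : Type*} [Field F] [Fintype F] [AddCommGroup V] [Module F V] [Finite V]
    (hq : 2 ≤ Fintype.card F) (D : ℕ) (hD : D ≤ finrank F V) :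
    (Nat.card {U : Submodule F V // finrank F ↥U = D} : ℝ) = grQ (Fintype.card F) (finrank F V) D := by
  have h := grass_count (F := F) (V := V) D hD
  have hcast : (Nat.card {U : Submodule F V // finrank F ↥U = D} : ℝ) * grP (Fintype.card F) D D
      = grP (Fintype.card F) (finrank F V) D := by
    rw [← grP_cast (by omega) (le_refl D), ← grP_cast (by omega) hD]
    exact_mod_cast congrArg (fun x : ℕ => (x : ℝ)) h
  have hpos : (0:ℝ) < grP (Fintype.card F) D D := grP_pos hq (le_refl D)
  rw [grQ, eq_div_iff hpos.ne']
  exact hcast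

end RTCmain

set_option maxHeartbeats 2000000 in
/-- the number of subspaces `U ∈ Gr(n, n−r)` violating property `(*)` is at most
`(4·q^{−r/8}/(1 − q^{−r/8}))·|Gr(n, n−r)|`. -/
theorem statement6 (F : Type) [Field F] [Fintype F] (n r : ℕ) (R α : ℝ)
    (hR : 0 < R ∧ R < 1) (hRr : R * (n : ℝ) ≤ (r : ℝ)) (hrn : r ≤ n)
    (hα0 : 0 ≤ α) (hα1 : α ≤ 1 - 1 / (Fintype.card F : ℝ))
    (hHα : RTC.Hq (Fintype.card F) α = R / 8) :
    (Nat.card {U : Submodule F (Fin n → F) // Module.finrank F U = n - r ∧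
        ∃ m : ℕ, 1 ≤ m ∧ m ≤ r ∧ ∃ V : Submodule F (Fin n → F),
          RTC.Sparse α V ∧ Module.finrank F V = m ∧
          (m : ℝ) / 2 ≤ (Module.finrank F ↥(U ⊓ V) : ℝ)} : ℝ) ≤
      4 * (Fintype.card F : ℝ) ^ (-(r : ℝ) / 8) /
          (1 - (Fintype.card F : ℝ) ^ (-(r : ℝ) / 8)) *
        (Nat.card {U : Submodule F (Fin n → F) // Module.finrank F U = n - r} : ℝ) := by

  classical
  obtain ⟨hR0, hR1⟩ := hR
  have hq : 2 ≤ Fintype.card F := Fintype.one_lt_card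
  set q : ℕ := Fintype.card F with hqdef
  have hQ1 : (1:ℝ) < (q:ℝ) := by exact_mod_cast hq.trans_lt' one_lt_two
  have hQ0 : (0:ℝ) < (q:ℝ) := by linarith
  rcases Nat.eq_zero_or_pos r with hr0 | hr1
  · subst hr0
    have hempty : IsEmpty {U : Submodule F (Fin n → F) // Module.finrank F U = n - 0 ∧
        ∃ m : ℕ, 1 ≤ m ∧ m ≤ 0 ∧ ∃ V : Submodule F (Fin n → F),
          RTC.Sparse α V ∧ Module.finrank F V = m ∧
          (m : ℝ) / 2 ≤ (Module.finrank F ↥(U ⊓ V) : ℝ)} := by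
      constructor
      rintro ⟨U, _, m, h1, h0, _⟩
      omega
    rw [Nat.card_of_isEmpty]
    have he : (-(((0:ℕ)):ℝ)/8) = (0:ℝ) := by norm_num
    rw [he, Real.rpow_zero]
    norm_num
  -- main case
  have hα0' : 0 < α := by
    rcases lt_or_eq_of_le hα0 with h | h
    · exact h
    · exfalso
      have : RTC.Hq q 0 = 0 := by simp [RTC.Hq]
      rw [← h, this] at hHα
      have : R = 0 := by linarith
      linarith
  have hα1' : α < 1 := by
    have : (0:ℝ) < 1/(q:ℝ) := by positivity
    linarith
  set d : ℕ := n - r with hddef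
  have hdn : d ≤ n := by omega
  have hnd : n - d = r := by omega
  have hfr : finrank F (Fin n → F) = n := by
    rw [Module.finrank_fintype_fun_eq_card, Fintype.card_fin]
  -- Grassmannian cardinality
  have cardGr : (Nat.card {U : Submodule F (Fin n → F) // Module.finrank F U = d} : ℝ)
      = grQ q n d := by
    have := cardGr_eq (F := F) (V := Fin n → F) hq d (by rw [hfr]; omega)
    rw [hfr] at this
    exact this
  set t : ℝ := (q:ℝ) ^ (-(r:ℝ)/8) with htdef
  have ht0 : 0 < t := Real.rpow_pos_of_pos hQ0 _
  have ht1 : t < 1 := by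
    apply Real.rpow_lt_one_of_one_lt_of_neg hQ1
    have : (0:ℝ) < (r:ℝ) := by exact_mod_cast hr1
    linarith
  -- the per-m bound
  have claim : ∀ m : ℕ, 1 ≤ m → m ≤ r →
      (Nat.card {U : Submodule F (Fin n → F) // Module.finrank F U = d ∧
        ∃ V : Submodule F (Fin n → F), RTC.Sparse α V ∧ Module.finrank F V = m ∧
          (m : ℝ) / 2 ≤ (Module.finrank F ↥(U ⊓ V) : ℝ)} : ℝ)
      ≤ 4 * t ^ m * grQ q n d := by
    intro m hm1 hmr
    set k : ℕ := (m+1)/2 with hkdef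
    have hk1 : 1 ≤ k := by omega
    have hkm : k ≤ m := by omega
    have hm2k : m ≤ 2 * k := by omega
    -- inner-most count for fixed W
    have boundW : ∀ W : Submodule F (Fin n → F), finrank F ↥W = k →
        (Nat.card {U : Submodule F (Fin n → F) // Module.finrank F U = d ∧ W ≤ U} : ℝ)
          ≤ grQ q n d / (q:ℝ) ^ (k * r) := by
      intro W hWk
      rw [le_div_iff₀ (by positivity)]
      by_cases hkd : k ≤ d
      · have h1 := card_above W (d := d) (by rw [hWk]; exact hkd)
        rw [hWk] at h1
        haveI : Finite ((Fin n → F) ⧸ W) := Finite.of_surjective _ (Submodule.mkQ_surjective W)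
        have hfq : finrank F ((Fin n → F) ⧸ W) = n - k := by
          have := Submodule.finrank_quotient_add_finrank W
          rw [hfr, hWk] at this
          omega
        have h2 := cardGr_eq (F := F) (V := (Fin n → F) ⧸ W) hq (d - k)
          (by rw [hfq]; omega)
        rw [hfq] at h2
        rw [h1, h2]
        have := grQ_above hq hkd hdn
        rw [hnd] at this
        exact this
      · have hempty : IsEmpty {U : Submodule F (Fin n → F) // Module.finrank F U = d ∧ W ≤ U} := by
          constructor
          rintro ⟨U, hUd, hWU⟩
          have := Submodule.finrank_mono hWU
          rw [hWk, hUd] at this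
          omega
        rw [Nat.card_of_isEmpty]
        have : (0:ℝ) ≤ grQ q n d := (grQ_pos hq hdn).le
        simpa using this
    -- count of W's inside V of dim m
    have boundK : ∀ V : Submodule F (Fin n → F), finrank F ↥V = m →
        (Nat.card {W : Submodule F (Fin n → F) // W ≤ V ∧ finrank F ↥W = k} : ℝ)
          ≤ 4 * (q:ℝ) ^ (k * (m - k)) := by
      intro V hVm
      rw [card_inside V k]
      have h2 := cardGr_eq (F := F) (V := ↥V) hq k (by rw [hVm]; exact hkm)
      rw [hVm] at h2
      rw [h2]
      exact grQ_upper hq hkm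
    -- count of sparse V's
    have boundS : (Nat.card {V : Submodule F (Fin n → F) // RTC.Sparse α V ∧ finrank F ↥V = m} : ℝ)
        ≤ (q:ℝ) ^ (((r:ℝ) * m) / 8) := by
      have h1 := sparse_card (F := F) (n := n) (α := α) m
      have h2 := entropy_ball (F := F) (n := n) hq hα0' hα1
      calc (Nat.card {V : Submodule F (Fin n → F) // RTC.Sparse α V ∧ finrank F ↥V = m} : ℝ)
          ≤ ((Nat.card {v : Fin n → F // (RTC.vwt v : ℝ) ≤ α * n}) : ℝ) ^ m := by
            exact_mod_cast h1
        _ ≤ ((q:ℝ) ^ ((n:ℝ) * RTC.Hq q α)) ^ m := by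
            apply pow_le_pow_left₀ (Nat.cast_nonneg _) h2
        _ = (q:ℝ) ^ ((n:ℝ) * RTC.Hq q α * m) := by
            rw [← Real.rpow_natCast ((q:ℝ) ^ ((n:ℝ) * RTC.Hq q α)) m, ← Real.rpow_mul hQ0.le]
        _ ≤ (q:ℝ) ^ (((r:ℝ) * m) / 8) := by
            apply Real.rpow_le_rpow_of_exponent_le hQ1.le
            rw [hHα]
            have hm0 : (0:ℝ) ≤ (m:ℝ) := Nat.cast_nonneg m
            nlinarith
    -- union bound over V then W
    letI : Fintype {V : Submodule F (Fin n → F) // RTC.Sparse α V ∧ finrank F ↥V = m} :=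
      Fintype.ofFinite _
    have step2 : Nat.card {U : Submodule F (Fin n → F) // Module.finrank F U = d ∧
        ∃ V : Submodule F (Fin n → F), RTC.Sparse α V ∧ Module.finrank F V = m ∧
          (m : ℝ) / 2 ≤ (Module.finrank F ↥(U ⊓ V) : ℝ)}
        ≤ ∑ V : {V : Submodule F (Fin n → F) // RTC.Sparse α V ∧ finrank F ↥V = m},
            Nat.card {U : Submodule F (Fin n → F) // Module.finrank F U = d ∧
              ∃ W : Submodule F (Fin n → F), W ≤ U ∧ W ≤ V.1 ∧ finrank F ↥W = k} := by
      apply card_le_sum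
      rintro U ⟨hUd, V, hVs, hVm, hVhalf⟩
      have hknat : k ≤ finrank F ↥(U ⊓ V) := by
        have : (m:ℝ) ≤ 2 * (finrank F ↥(U ⊓ V) : ℝ) := by linarith
        have hmn : m ≤ 2 * finrank F ↥(U ⊓ V) := by exact_mod_cast this
        omega
      obtain ⟨W, hWle, hWk⟩ := exists_sub (U ⊓ V) hknat
      exact ⟨⟨V, hVs, hVm⟩, hUd, W, le_trans hWle inf_le_left, le_trans hWle inf_le_right, hWk⟩
    have step3 : ∀ V : {V : Submodule F (Fin n → F) // RTC.Sparse α V ∧ finrank F ↥V = m},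
        (Nat.card {U : Submodule F (Fin n → F) // Module.finrank F U = d ∧
              ∃ W : Submodule F (Fin n → F), W ≤ U ∧ W ≤ V.1 ∧ finrank F ↥W = k} : ℝ)
          ≤ 4 * (q:ℝ) ^ (k * (m - k)) * (grQ q n d / (q:ℝ) ^ (k * r)) := by
      intro V
      letI : Fintype {W : Submodule F (Fin n → F) // W ≤ V.1 ∧ finrank F ↥W = k} :=
        Fintype.ofFinite _
      have h3 : Nat.card {U : Submodule F (Fin n → F) // Module.finrank F U = d ∧
              ∃ W : Submodule F (Fin n → F), W ≤ U ∧ W ≤ V.1 ∧ finrank F ↥W = k}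
          ≤ ∑ W : {W : Submodule F (Fin n → F) // W ≤ V.1 ∧ finrank F ↥W = k},
              Nat.card {U : Submodule F (Fin n → F) // Module.finrank F U = d ∧ W.1 ≤ U} := by
        apply card_le_sum
        rintro U ⟨hUd, W, hWU, hWV, hWk⟩
        exact ⟨⟨W, hWV, hWk⟩, hUd, hWU⟩
      calc (Nat.card {U : Submodule F (Fin n → F) // Module.finrank F U = d ∧
              ∃ W : Submodule F (Fin n → F), W ≤ U ∧ W ≤ V.1 ∧ finrank F ↥W = k} : ℝ)
          ≤ ((∑ W : {W : Submodule F (Fin n → F) // W ≤ V.1 ∧ finrank F ↥W = k},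
              Nat.card {U : Submodule F (Fin n → F) // Module.finrank F U = d ∧ W.1 ≤ U} : ℕ) : ℝ) := by
            exact_mod_cast h3
        _ = ∑ W : {W : Submodule F (Fin n → F) // W ≤ V.1 ∧ finrank F ↥W = k},
              ((Nat.card {U : Submodule F (Fin n → F) // Module.finrank F U = d ∧ W.1 ≤ U} : ℕ) : ℝ) := by
            push_cast; ring
        _ ≤ ∑ _W : {W : Submodule F (Fin n → F) // W ≤ V.1 ∧ finrank F ↥W = k},
              (grQ q n d / (q:ℝ) ^ (k * r)) := by
            apply Finset.sum_le_sum
            intro W _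
            exact boundW W.1 W.2.2
        _ = (Nat.card {W : Submodule F (Fin n → F) // W ≤ V.1 ∧ finrank F ↥W = k} : ℝ)
              * (grQ q n d / (q:ℝ) ^ (k * r)) := by
            rw [Finset.sum_const, Finset.card_univ, Nat.card_eq_fintype_card, nsmul_eq_mul]
        _ ≤ (4 * (q:ℝ) ^ (k * (m - k))) * (grQ q n d / (q:ℝ) ^ (k * r)) := by
            apply mul_le_mul_of_nonneg_right (boundK V.1 V.2.2)
            exact div_nonneg (grQ_pos hq hdn).le (by positivity)
        _ = 4 * (q:ℝ) ^ (k * (m - k)) * (grQ q n d / (q:ℝ) ^ (k * r)) := by ring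
    -- combine
    have hcast : (Nat.card {U : Submodule F (Fin n → F) // Module.finrank F U = d ∧
        ∃ V : Submodule F (Fin n → F), RTC.Sparse α V ∧ Module.finrank F V = m ∧
          (m : ℝ) / 2 ≤ (Module.finrank F ↥(U ⊓ V) : ℝ)} : ℝ)
        ≤ (Nat.card {V : Submodule F (Fin n → F) // RTC.Sparse α V ∧ finrank F ↥V = m} : ℝ)
          * (4 * (q:ℝ) ^ (k * (m - k)) * (grQ q n d / (q:ℝ) ^ (k * r))) := by
      calc (Nat.card {U : Submodule F (Fin n → F) // Module.finrank F U = d ∧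
          ∃ V : Submodule F (Fin n → F), RTC.Sparse α V ∧ Module.finrank F V = m ∧
            (m : ℝ) / 2 ≤ (Module.finrank F ↥(U ⊓ V) : ℝ)} : ℝ)
          ≤ ((∑ V : {V : Submodule F (Fin n → F) // RTC.Sparse α V ∧ finrank F ↥V = m},
              Nat.card {U : Submodule F (Fin n → F) // Module.finrank F U = d ∧
                ∃ W : Submodule F (Fin n → F), W ≤ U ∧ W ≤ V.1 ∧ finrank F ↥W = k} : ℕ) : ℝ) := by
            exact_mod_cast step2
        _ = ∑ V : {V : Submodule F (Fin n → F) // RTC.Sparse α V ∧ finrank F ↥V = m},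
              ((Nat.card {U : Submodule F (Fin n → F) // Module.finrank F U = d ∧
                ∃ W : Submodule F (Fin n → F), W ≤ U ∧ W ≤ V.1 ∧ finrank F ↥W = k} : ℕ) : ℝ) := by
            push_cast; ring
        _ ≤ ∑ _V : {V : Submodule F (Fin n → F) // RTC.Sparse α V ∧ finrank F ↥V = m},
              (4 * (q:ℝ) ^ (k * (m - k)) * (grQ q n d / (q:ℝ) ^ (k * r))) :=
            Finset.sum_le_sum (fun V _ => step3 V)
        _ = (Nat.card {V : Submodule F (Fin n → F) // RTC.Sparse α V ∧ finrank F ↥V = m} : ℝ)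
              * (4 * (q:ℝ) ^ (k * (m - k)) * (grQ q n d / (q:ℝ) ^ (k * r))) := by
            rw [Finset.sum_const, Finset.card_univ, Nat.card_eq_fintype_card, nsmul_eq_mul]
    -- numeric bound
    have hnum : (Nat.card {V : Submodule F (Fin n → F) // RTC.Sparse α V ∧ finrank F ↥V = m} : ℝ)
          * (4 * (q:ℝ) ^ (k * (m - k)) * (grQ q n d / (q:ℝ) ^ (k * r)))
        ≤ 4 * t ^ m * grQ q n d := by
      have hgr0 : (0:ℝ) ≤ grQ q n d := (grQ_pos hq hdn).le
      have hexp : (q:ℝ) ^ (((r:ℝ) * m) / 8) * ((q:ℝ) ^ (k * (m - k)) / (q:ℝ) ^ (k * r))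
          ≤ t ^ m := by
        have e1 : ((q:ℝ)) ^ (k * (m - k)) = (q:ℝ) ^ (((k * (m - k) : ℕ)):ℝ) := by
          rw [Real.rpow_natCast]
        have e2 : ((q:ℝ)) ^ (k * r) = (q:ℝ) ^ (((k * r : ℕ)):ℝ) := by
          rw [Real.rpow_natCast]
        rw [e1, e2, ← Real.rpow_sub hQ0, ← Real.rpow_add hQ0]
        have e3 : t ^ m = (q:ℝ) ^ ((-(r:ℝ)/8) * m) := by
          rw [htdef, ← Real.rpow_natCast ((q:ℝ) ^ (-(r:ℝ)/8)) m, ← Real.rpow_mul hQ0.le]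
        rw [e3]
        apply Real.rpow_le_rpow_of_exponent_le hQ1.le
        have hc1 : ((k * (m - k) : ℕ) : ℝ) = (k:ℝ) * ((m:ℝ) - (k:ℝ)) := by
          push_cast [Nat.cast_sub hkm]; ring
        have hc2 : ((k * r : ℕ) : ℝ) = (k:ℝ) * (r:ℝ) := by push_cast; ring
        rw [hc1, hc2]
        have hmr' : (m:ℝ) ≤ (r:ℝ) := by exact_mod_cast hmr
        have hm2k' : (m:ℝ) ≤ 2 * (k:ℝ) := by exact_mod_cast hm2k
        have hkm' : (k:ℝ) ≤ (m:ℝ) := by exact_mod_cast hkm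
        have hm1' : (1:ℝ) ≤ (m:ℝ) := by exact_mod_cast hm1
        nlinarith [sq_nonneg ((k:ℝ) - (m:ℝ)/2), mul_nonneg (sub_nonneg.mpr hmr') (sub_nonneg.mpr (by linarith : (m:ℝ)/2 ≤ (k:ℝ)))]
      calc (Nat.card {V : Submodule F (Fin n → F) // RTC.Sparse α V ∧ finrank F ↥V = m} : ℝ)
            * (4 * (q:ℝ) ^ (k * (m - k)) * (grQ q n d / (q:ℝ) ^ (k * r)))
          ≤ (q:ℝ) ^ (((r:ℝ) * m) / 8) * (4 * (q:ℝ) ^ (k * (m - k)) * (grQ q n d / (q:ℝ) ^ (k * r))) := by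
            apply mul_le_mul_of_nonneg_right boundS
            positivity
        _ = 4 * ((q:ℝ) ^ (((r:ℝ) * m) / 8) * ((q:ℝ) ^ (k * (m - k)) / (q:ℝ) ^ (k * r))) * grQ q n d := by
            ring
        _ ≤ 4 * t ^ m * grQ q n d := by
            apply mul_le_mul_of_nonneg_right _ hgr0
            apply mul_le_mul_of_nonneg_left hexp (by norm_num)
    exact hcast.trans hnum
  -- union over m
  have step1N : Nat.card {U : Submodule F (Fin n → F) // Module.finrank F U = n - r ∧
        ∃ m : ℕ, 1 ≤ m ∧ m ≤ r ∧ ∃ V : Submodule F (Fin n → F),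
          RTC.Sparse α V ∧ Module.finrank F V = m ∧
          (m : ℝ) / 2 ≤ (Module.finrank F ↥(U ⊓ V) : ℝ)}
      ≤ ∑ i : Fin r, Nat.card {U : Submodule F (Fin n → F) // Module.finrank F U = d ∧
          ∃ V : Submodule F (Fin n → F), RTC.Sparse α V ∧ Module.finrank F V = (i.1+1) ∧
            ((i.1+1 : ℕ) : ℝ) / 2 ≤ (Module.finrank F ↥(U ⊓ V) : ℝ)} := by
    apply card_le_sum
    rintro U ⟨hUd, m, hm1, hmr, V, hVs, hVm, hVhalf⟩
    refine ⟨⟨m - 1, by omega⟩, ?_, V, hVs, ?_, ?_⟩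
    · rw [hUd]
    · have : m - 1 + 1 = m := by omega
      rw [this]; exact hVm
    · have : m - 1 + 1 = m := by omega
      rw [this]; exact hVhalf
  have step1 := (Nat.cast_le (α := ℝ)).mpr step1N
  rw [Nat.cast_sum] at step1
  -- finish with geometric sum
  have hgeom : ∑ i : Fin r, t ^ (i.1 + 1) ≤ t / (1 - t) := by
    rw [Fin.sum_univ_eq_sum_range (fun i => t ^ (i+1)) r]
    have hS : ∑ i ∈ range r, t ^ (i+1) = t * ∑ i ∈ range r, t ^ i := by
      rw [Finset.mul_sum]
      apply Finset.sum_congr rfl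
      intro i _
      rw [pow_succ]; ring
    have hgs : (1 - t) * ∑ i ∈ range r, t ^ i = 1 - t ^ r := by
      have hg := geom_sum_mul t r
      linear_combination -hg
    have hsum_le : ∑ i ∈ range r, t ^ i ≤ 1 / (1 - t) := by
      rw [le_div_iff₀ (by linarith)]
      have : t ^ r ≥ 0 := by positivity
      nlinarith
    rw [hS, div_eq_mul_one_div]
    exact mul_le_mul_of_nonneg_left hsum_le ht0.le
  calc (Nat.card {U : Submodule F (Fin n → F) // Module.finrank F U = n - r ∧
        ∃ m : ℕ, 1 ≤ m ∧ m ≤ r ∧ ∃ V : Submodule F (Fin n → F),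
          RTC.Sparse α V ∧ Module.finrank F V = m ∧
          (m : ℝ) / 2 ≤ (Module.finrank F ↥(U ⊓ V) : ℝ)} : ℝ)
      ≤ ∑ i : Fin r, (Nat.card {U : Submodule F (Fin n → F) // Module.finrank F U = d ∧
          ∃ V : Submodule F (Fin n → F), RTC.Sparse α V ∧ Module.finrank F V = (i.1+1) ∧
            ((i.1+1 : ℕ) : ℝ) / 2 ≤ (Module.finrank F ↥(U ⊓ V) : ℝ)} : ℝ) := step1
    _ ≤ ∑ i : Fin r, 4 * t ^ (i.1+1) * grQ q n d := by
        apply Finset.sum_le_sum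
        intro i _
        exact claim (i.1+1) (by omega) (by omega)
    _ = 4 * (∑ i : Fin r, t ^ (i.1+1)) * grQ q n d := by
        rw [Finset.mul_sum, Finset.sum_mul]
    _ ≤ 4 * (t / (1 - t)) * grQ q n d := by
        apply mul_le_mul_of_nonneg_right _ ((grQ_pos hq hdn).le)
        apply mul_le_mul_of_nonneg_left hgeom (by norm_num)
    _ = 4 * t / (1 - t) * grQ q n d := by ring
    _ = 4 * (q:ℝ) ^ (-(r:ℝ)/8) / (1 - (q:ℝ) ^ (-(r:ℝ)/8))
          * (Nat.card {U : Submodule F (Fin n → F) // Module.finrank F U = n - r} : ℝ) := by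
        rw [htdef, cardGr]
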